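/- Let P = (E, ρ) be a (q,m)-polymatroid of rank K = ρ(E). Then d_r(P) < d_{r+m}(P) for any positive integer r with r + m ≤ K, and d_s(P*) < d_{s+m}(P*) for any positive integer s with s + m ≤ mn − K. -/

import Mathlib

set_option linter.unusedSectionVars false

open Module Matrix

variable {F : Type*} [Field F] [Fintype F] {n : ℕ}

/-- The orthogonal complement of a subspace of `𝔽_q^n` with respect to the standard dot product. -/
def perp (X : Submodule F (Fin n → F)) : Submodule F (Fin n → F) where
  carrier := {x | ∀ y ∈ X, dotProduct x y = 0}
  add_mem' := fun {a b} ha hb y hy => by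
    rw [Set.mem_setOf_eq] at *
    rw [add_dotProduct, ha y hy, hb y hy, add_zero]
  zero_mem' := fun y hy => zero_dotProduct y
  smul_mem' := fun c a ha y hy => by
    rw [Set.mem_setOf_eq] at *
    rw [smul_dotProduct, ha y hy, smul_zero]

/-- The dual rank function `ρ*(X) = ρ(X^⊥) + m·dim X − ρ(E)`. -/
noncomputable def dualRho (m : ℕ) (rho : Submodule F (Fin n → F) → ℤ) (X : Submodule F (Fin n → F)) : ℤ :=
  rho (perp X) + (m : ℤ) * (finrank F X : ℤ) - rho ⊤

/-- The nullity function `ν(X) = m·dim X − ρ(X)`. -/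
noncomputable def nullity (m : ℕ) (rho : Submodule F (Fin n → F) → ℤ) (X : Submodule F (Fin n → F)) : ℤ :=
  (m : ℤ) * (finrank F X : ℤ) - rho X

/-- The conullity function `ν*(X) = ρ(E) − ρ(X^⊥)`. -/
def coNull (rho : Submodule F (Fin n → F) → ℤ) (X : Submodule F (Fin n → F)) : ℤ :=
  rho ⊤ - rho (perp X)

/-- The `r`-th generalized weight `d_r = min{dim X : ν*(X) ≥ r}`. -/
noncomputable def genW (rho : Submodule F (Fin n → F) → ℤ) (r : ℤ) : ℕ :=
  sInf {d : ℕ | ∃ X : Submodule F (Fin n → F), finrank F X = d ∧ r ≤ coNull rho X}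

/-- `h(x) = max{ν(X) : dim X = x}`. -/
noncomputable def hFun (m : ℕ) (rho : Submodule F (Fin n → F) → ℤ) (x : ℕ) : ℤ :=
  sSup {v : ℤ | ∃ X : Submodule F (Fin n → F), finrank F X = x ∧ v = nullity m rho X}

/-- `h*(x) = max{ν*(X) : dim X = x}`. -/
noncomputable def hStar (rho : Submodule F (Fin n → F) → ℤ) (x : ℕ) : ℤ :=
  sSup {v : ℤ | ∃ X : Submodule F (Fin n → F), finrank F X = x ∧ v = coNull rho X}

/-- A `(q,m)`-polymatroid on `E = 𝔽_q^n`. -/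
structure QMPolymatroid (F : Type*) [Field F] [Fintype F] (n m : ℕ) where
  rho : Submodule F (Fin n → F) → ℤ
  rho_nonneg : ∀ X, 0 ≤ rho X
  rho_le : ∀ X, rho X ≤ (m : ℤ) * (finrank F X : ℤ)
  rho_mono : ∀ ⦃X Y⦄, X ≤ Y → rho X ≤ rho Y
  rho_submodular : ∀ X Y, rho (X ⊔ Y) + rho (X ⊓ Y) ≤ rho X + rho Y

/-- A `(q,m)`-demi-polymatroid on `E = 𝔽_q^n`. -/
structure QMDemiPolymatroid (F : Type*) [Field F] [Fintype F] (n m : ℕ) where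
  rho : Submodule F (Fin n → F) → ℤ
  rho_nonneg : ∀ X, 0 ≤ rho X
  rho_le : ∀ X, rho X ≤ (m : ℤ) * (finrank F X : ℤ)
  rho_mono : ∀ ⦃X Y⦄, X ≤ Y → rho X ≤ rho Y
  dual_nonneg : ∀ X, 0 ≤ dualRho m rho X
  dual_le : ∀ X, dualRho m rho X ≤ (m : ℤ) * (finrank F X : ℤ)
  dual_mono : ∀ ⦃X Y⦄, X ≤ Y → dualRho m rho X ≤ dualRho m rho Y

section Codes

variable {m : ℕ}

/-- The row space of a matrix. -/
def rowSpace (A : Matrix (Fin m) (Fin n) F) : Submodule F (Fin n → F) :=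
  Submodule.span F (Set.range A)

theorem rowSpace_le_iff (A : Matrix (Fin m) (Fin n) F) (X : Submodule F (Fin n → F)) :
    rowSpace A ≤ X ↔ ∀ i, A i ∈ X := by
  rw [rowSpace, Submodule.span_le]; exact Set.range_subset_iff

/-- Matrices whose row space is contained in `X`. -/
def supportedOn (m : ℕ) (X : Submodule F (Fin n → F)) :
    Submodule F (Matrix (Fin m) (Fin n) F) where
  carrier := {A | rowSpace A ≤ X}
  add_mem' := fun {A B} hA hB => by
    rw [Set.mem_setOf_eq, rowSpace_le_iff] at *
    exact fun i => X.add_mem (hA i) (hB i)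
  zero_mem' := by
    rw [Set.mem_setOf_eq, rowSpace_le_iff]
    exact fun i => X.zero_mem
  smul_mem' := fun c A hA => by
    rw [Set.mem_setOf_eq, rowSpace_le_iff] at *
    exact fun i => X.smul_mem c (hA i)

/-- `C(X)`: the subspace of a Delsarte code `C` of matrices whose row space lies in `X`. -/
def subcode (C : Submodule F (Matrix (Fin m) (Fin n) F)) (X : Submodule F (Fin n → F)) :
    Submodule F (Matrix (Fin m) (Fin n) F) :=
  C ⊓ supportedOn m X

/-- The rank function `ρ_C(X) = dim C − dim C(X^⊥)` of a Delsarte code. -/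
noncomputable def rhoC (C : Submodule F (Matrix (Fin m) (Fin n) F))
    (X : Submodule F (Fin n → F)) : ℤ :=
  (finrank F C : ℤ) - (finrank F (subcode C (perp X)) : ℤ)

/-- The generalized weight `d_r(C) = min{dim X : dim C(X) ≥ r}` of a Delsarte code. -/
noncomputable def codeWeight (C : Submodule F (Matrix (Fin m) (Fin n) F)) (r : ℤ) : ℕ :=
  sInf {d : ℕ | ∃ X : Submodule F (Fin n → F),
    finrank F X = d ∧ r ≤ (finrank F (subcode C X) : ℤ)}

/-- The trace dual of a Delsarte code. -/
def traceDual (C : Submodule F (Matrix (Fin m) (Fin n) F)) :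
    Submodule F (Matrix (Fin m) (Fin n) F) where
  carrier := {N | ∀ M ∈ C, Matrix.trace (M * Nᵀ) = 0}
  add_mem' := fun {N₁ N₂} h1 h2 M hM => by
    rw [Matrix.transpose_add, Matrix.mul_add, Matrix.trace_add, h1 M hM, h2 M hM, add_zero]
  zero_mem' := fun M hM => by simp
  smul_mem' := fun c N hN M hM => by
    rw [Matrix.transpose_smul, Matrix.mul_smul, Matrix.trace_smul, hN M hM, smul_zero]

/-- The transposed code `Cᵀ = {Mᵗ : M ∈ C}` of a code of square matrices. -/
def transposeCode (C : Submodule F (Matrix (Fin n) (Fin n) F)) :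
    Submodule F (Matrix (Fin n) (Fin n) F) where
  carrier := {A | Aᵀ ∈ C}
  add_mem' := fun {A B} hA hB => by
    rw [Set.mem_setOf_eq, Matrix.transpose_add]; exact C.add_mem hA hB
  zero_mem' := by
    rw [Set.mem_setOf_eq, Matrix.transpose_zero]; exact C.zero_mem
  smul_mem' := fun c A hA => by
    rw [Set.mem_setOf_eq, Matrix.transpose_smul]; exact C.smul_mem c hA

/-- The maximum rank of a matrix in a subspace of matrices. -/
noncomputable def maxrank (A : Submodule F (Matrix (Fin m) (Fin n) F)) : ℕ :=
  sSup {r : ℕ | ∃ M ∈ A, M.rank = r}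

/-- An optimal anticode: a subspace `𝒜` of `𝕄` with `dim 𝒜 = m · maxrank 𝒜`. -/
def IsOptimalAnticode (A : Submodule F (Matrix (Fin m) (Fin n) F)) : Prop :=
  finrank F A = m * maxrank A

/-- Ravagnani's generalized weight `a_r(C)`. -/
noncomputable def aWeight (C : Submodule F (Matrix (Fin m) (Fin n) F)) (r : ℤ) : ℕ :=
  (sInf {d : ℕ | ∃ A : Submodule F (Matrix (Fin m) (Fin n) F),
    IsOptimalAnticode A ∧ finrank F A = d ∧ r ≤ (finrank F (A ⊓ C : Submodule F _) : ℤ)}) / m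

end Codes


section Aux

variable {F : Type*} [Field F] [Fintype F] {n : ℕ}

lemma aux_toDual_eq_dot (x y : Fin n → F) :
    (Pi.basisFun F (Fin n)).toDual x y = dotProduct y x := by
  have h := (Pi.basisFun F (Fin n)).sum_repr y
  conv_lhs => rw [← h]
  have h2 : ∀ i : Fin n, (Pi.basisFun F (Fin n)).toDual x (Pi.single i 1) = x i := by
    intro i
    have h3 := (Pi.basisFun F (Fin n)).toDual_apply_left x i
    simp only [Pi.basisFun_apply, Pi.basisFun_repr] at h3
    exact h3
  simp [dotProduct, Pi.basisFun_repr, h2, mul_comm]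

lemma aux_perp_eq_comap (X : Submodule F (Fin n → F)) :
    perp X = Submodule.comap
      ((Pi.basisFun F (Fin n)).toDualEquiv : (Fin n → F) →ₗ[F] Module.Dual F (Fin n → F))
      X.dualAnnihilator := by
  ext x
  simp only [perp, Submodule.mem_mk, AddSubmonoid.mem_mk, AddSubsemigroup.mem_mk,
    Set.mem_setOf_eq, Submodule.mem_comap, Submodule.mem_dualAnnihilator]
  have e : ∀ y, ((Pi.basisFun F (Fin n)).toDualEquiv x : Module.Dual F (Fin n → F)) y
      = (Pi.basisFun F (Fin n)).toDual x y := fun _ => rfl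
  constructor
  · intro h y hy
    rw [LinearEquiv.coe_coe, e, aux_toDual_eq_dot, dotProduct_comm]
    exact h y hy
  · intro h y hy
    have h5 := h y hy
    rw [LinearEquiv.coe_coe, e, aux_toDual_eq_dot, dotProduct_comm] at h5
    exact h5

set_option maxHeartbeats 800000 in
lemma aux_finrank_perp (X : Submodule F (Fin n → F)) :
    finrank F (perp X) + finrank F X = n := by
  have h1 : finrank F (perp X) = finrank F X.dualAnnihilator := by
    rw [aux_perp_eq_comap, Submodule.comap_equiv_eq_map_symm]
    exact LinearEquiv.finrank_map_eq _ _
  rw [h1, ← (Subspace.quotEquivAnnihilator X).finrank_eq,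
    Submodule.finrank_quotient_add_finrank]
  simp

lemma aux_perp_antitone {X Y : Submodule F (Fin n → F)} (h : X ≤ Y) : perp Y ≤ perp X :=
  fun x hx y hy => hx y (h hy)

lemma aux_perp_bot : perp (⊥ : Submodule F (Fin n → F)) = ⊤ := by
  ext x
  simp only [Submodule.mem_top, iff_true]
  intro y hy
  rw [Submodule.mem_bot] at hy
  rw [hy, dotProduct_zero]

lemma aux_perp_top : perp (⊤ : Submodule F (Fin n → F)) = ⊥ := by
  ext x
  simp only [Submodule.mem_bot]
  constructor
  · intro h
    funext i
    have := h (Pi.single i 1) (Submodule.mem_top)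
    rwa [dotProduct_single, mul_one] at this
  · rintro rfl y _
    exact zero_dotProduct y

lemma aux_le_perp_perp (X : Submodule F (Fin n → F)) : X ≤ perp (perp X) := by
  intro x hx y hy
  rw [dotProduct_comm]
  exact hy x hx

lemma aux_perp_perp (X : Submodule F (Fin n → F)) : perp (perp X) = X := by
  have h1 := aux_finrank_perp X
  have h2 := aux_finrank_perp (perp X)
  have h3 : finrank F (perp (perp X)) = finrank F X := by omega
  exact (Submodule.eq_of_le_of_finrank_le (aux_le_perp_perp X) (le_of_eq h3)).symm

lemma aux_finrank_span_le (v : Fin n → F) :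
    finrank F (Submodule.span F ({v} : Set (Fin n → F))) ≤ 1 := by
  by_cases hv : v = 0
  · subst hv
    rw [Submodule.span_zero_singleton]
    simp
  · rw [finrank_span_singleton hv]

lemma aux_finrank_sup_span_le (A : Submodule F (Fin n → F)) (v : Fin n → F) :
    finrank F (A ⊔ Submodule.span F {v} : Submodule F (Fin n → F)) ≤ finrank F A + 1 := by
  have h := Submodule.finrank_sup_add_finrank_inf_eq A (Submodule.span F {v})
  have h2 := aux_finrank_span_le v
  omega

/-- Generic step lemma: if `f ⊥ = 0` and `f` grows by at most `m` when adding one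
generator, then the generalized weights of `f` satisfy `d_r < d_{r+m}`. -/
lemma aux_genW_lt (m : ℕ) (f : Submodule F (Fin n → F) → ℤ)
    (hbot : f ⊥ = 0)
    (hstep : ∀ (A : Submodule F (Fin n → F)) (v : Fin n → F),
      f (A ⊔ Submodule.span F {v}) ≤ f A + (m : ℤ))
    (r : ℤ) (hr : 1 ≤ r) (hrm : r + (m : ℤ) ≤ f ⊤) :
    genW f r < genW f (r + (m : ℤ)) := by
  have hfintop : finrank F (⊤ : Submodule F (Fin n → F)) = n := by simp
  have hne : (n : ℕ) ∈ {d : ℕ | ∃ X : Submodule F (Fin n → F),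
      finrank F X = d ∧ r + (m : ℤ) ≤ coNull f X} := by
    refine ⟨⊤, hfintop, ?_⟩
    rw [coNull, aux_perp_top, hbot]
    omega
  have hmem : ∃ X : Submodule F (Fin n → F),
      finrank F X = genW f (r + (m : ℤ)) ∧ r + (m : ℤ) ≤ coNull f X :=
    Nat.sInf_mem (Set.nonempty_of_mem hne)
  obtain ⟨X, hXr, hXc⟩ := hmem
  have hd1 : 1 ≤ genW f (r + (m : ℤ)) := by
    by_contra h
    have hX0 : X = ⊥ := by
      rw [← Submodule.finrank_eq_zero]
      omega
    rw [hX0, coNull, aux_perp_bot] at hXc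
    omega
  -- pick v outside perp X
  have hfp := aux_finrank_perp X
  have hplt : perp X < ⊤ := by
    rcases lt_or_eq_of_le (le_top : perp X ≤ ⊤) with h | h
    · exact h
    · exfalso
      have : finrank F (perp X) = n := by rw [h]; exact hfintop
      omega
  obtain ⟨v, -, hv⟩ := SetLike.exists_of_lt hplt
  have hZlt : perp X < perp X ⊔ Submodule.span F {v} := by
    refine lt_of_le_of_ne le_sup_left ?_
    intro h
    exact hv (h ▸ Submodule.mem_sup_right (Submodule.mem_span_singleton_self v))
  have hZr : finrank F (perp X ⊔ Submodule.span F {v} : Submodule F (Fin n → F))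
      = finrank F (perp X) + 1 := by
    have h1 := Submodule.finrank_lt_finrank_of_lt hZlt
    have h2 := aux_finrank_sup_span_le (perp X) v
    omega
  have hfpZ := aux_finrank_perp (perp X ⊔ Submodule.span F {v})
  have hYr : finrank F (perp (perp X ⊔ Submodule.span F {v})) + 1
      = genW f (r + (m : ℤ)) := by omega
  have hperpY : perp (perp (perp X ⊔ Submodule.span F {v}))
      = perp X ⊔ Submodule.span F {v} := aux_perp_perp _
  have hcnY : r ≤ coNull f (perp (perp X ⊔ Submodule.span F {v})) := by
    have h1 := hstep (perp X) v
    rw [coNull, hperpY]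
    rw [coNull] at hXc
    omega
  have hle : genW f r ≤ finrank F (perp (perp X ⊔ Submodule.span F {v})) :=
    Nat.sInf_le ⟨_, rfl, hcnY⟩
  omega

end Aux

/-- `d_r(P) < d_{r+m}(P)` whenever `r + m ≤ K`, and
`d_s(P*) < d_{s+m}(P*)` whenever `s + m ≤ mn − K`. -/
theorem genW_strict_mono_m {F : Type*} [Field F] [Fintype F] {n m : ℕ}
    (P : QMPolymatroid F n m) :
    (∀ r : ℤ, 1 ≤ r → r + (m : ℤ) ≤ P.rho ⊤ →
      genW P.rho r < genW P.rho (r + (m : ℤ))) ∧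
    (∀ s : ℤ, 1 ≤ s → s + (m : ℤ) ≤ (m : ℤ) * (n : ℤ) - P.rho ⊤ →
      genW (dualRho m P.rho) s < genW (dualRho m P.rho) (s + (m : ℤ))) := by
  have hbot : P.rho ⊥ = 0 := by
    have h1 := P.rho_nonneg ⊥
    have h2 := P.rho_le ⊥
    simp only [finrank_bot, Nat.cast_zero, mul_zero] at h2
    omega
  have hspan : ∀ v : Fin n → F,
      P.rho (Submodule.span F {v}) ≤ (m : ℤ) := by
    intro v
    have h1 := P.rho_le (Submodule.span F {v})
    have h2 := aux_finrank_span_le v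
    have h3 : (finrank F (Submodule.span F ({v} : Set (Fin n → F))) : ℤ) ≤ 1 := by
      exact_mod_cast h2
    nlinarith [P.rho_nonneg (Submodule.span F ({v} : Set (Fin n → F))), Int.natCast_nonneg m]
  constructor
  · intro r hr hrm
    refine aux_genW_lt m P.rho hbot ?_ r hr hrm
    intro A v
    have h1 := P.rho_submodular A (Submodule.span F {v})
    have h2 := P.rho_nonneg (A ⊓ Submodule.span F {v})
    have h3 := hspan v
    omega
  · intro s hs hsm
    have hdbot : dualRho m P.rho ⊥ = 0 := by
      rw [dualRho, aux_perp_bot]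
      simp
    have hdtop : dualRho m P.rho ⊤ = (m : ℤ) * (n : ℤ) - P.rho ⊤ := by
      rw [dualRho, aux_perp_top, hbot]
      simp
    refine aux_genW_lt m (dualRho m P.rho) hdbot ?_ s hs (by omega)
    intro A v
    rw [dualRho, dualRho]
    have h1 : P.rho (perp (A ⊔ Submodule.span F {v})) ≤ P.rho (perp A) :=
      P.rho_mono (aux_perp_antitone le_sup_left)
    have h2 := aux_finrank_sup_span_le A v
    have h3 : (finrank F (A ⊔ Submodule.span F {v} : Submodule F (Fin n → F)) : ℤ)
        ≤ (finrank F A : ℤ) + 1 := by exact_mod_cast h2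
    nlinarith [Int.natCast_nonneg m]
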